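/- Let d ≥ 2 be an integer, M > 0, Δ = M/(16(d−1)), n = 15, and R > 0. Let f : ℝ^d → ℝ satisfy f(x) − f(x*) = (M/2 + δ(x))·‖x − x*‖² with |δ(x)| ≤ Δ for all x, where x* ∈ ℝ^d. Fix a coordinate i and let y, z, p ∈ ℝ^d agree in every coordinate j ≠ i, with p_i = x*_i. Assume f(y) ≤ f(z), |z_i − x*_i| ≤ R/(2n) = R/30, and ‖p − x*‖² ≤ (d−1)R²/4. Then (y_i − x*_i)² ≤ (51/700)·R², and consequently |y_i − z_i| ≤ (1/30 + √(51/700))·R ≤ R/3. (This is the key estimate of Theorem 2: each inner step of Direction BBS localizes the i-th coordinate of the minimizer to within R/3 of the found point, so the maximum edge length of the box decreases by at least a factor 3/2 per inner step.) -/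

import Mathlib

/-- key estimate of Theorem 2 (Direction BBS with `n = 15`,
`Δ = M/(16(d-1))`): `(y_i - x*_i)² ≤ (51/700)R²` and consequently
`|y_i - z_i| ≤ (1/30 + √(51/700))·R ≤ R/3`. -/
theorem direction_bbs_key_estimate (d : ℕ) (hd : 2 ≤ d) (M Δ : ℝ) (hM : 0 < M)
    (hΔ : Δ = M / (16 * ((d : ℝ) - 1)))
    (R : ℝ) (hR : 0 < R)
    (f : EuclideanSpace ℝ (Fin d) → ℝ)
    (δ : EuclideanSpace ℝ (Fin d) → ℝ)
    (xstar : EuclideanSpace ℝ (Fin d))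
    (hf : ∀ x, f x - f xstar = (M / 2 + δ x) * ‖x - xstar‖ ^ 2)
    (hδbound : ∀ x, |δ x| ≤ Δ)
    (i : Fin d) (y z p : EuclideanSpace ℝ (Fin d))
    (hyz : ∀ j, j ≠ i → y j = z j) (hyp : ∀ j, j ≠ i → y j = p j)
    (hpi : p i = xstar i)
    (hfyz : f y ≤ f z)
    (hzclose : |z i - xstar i| ≤ R / 30)
    (hproj : ‖p - xstar‖ ^ 2 ≤ ((d : ℝ) - 1) * R ^ 2 / 4) :
    (y i - xstar i) ^ 2 ≤ 51 / 700 * R ^ 2 ∧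
      |y i - z i| ≤ (1 / 30 + Real.sqrt (51 / 700)) * R ∧
      (1 / 30 + Real.sqrt (51 / 700)) * R ≤ R / 3 := by
  have hd1 : (1 : ℝ) ≤ (d : ℝ) - 1 := by
    have : (2 : ℝ) ≤ (d : ℝ) := by exact_mod_cast hd
    linarith
  have hΔpos : 0 < Δ := by
    rw [hΔ]; positivity
  have hΔle : Δ ≤ M / 16 := by
    rw [hΔ, div_le_div_iff₀ (by linarith) (by norm_num)]
    nlinarith
  have hΔd : Δ * ((d : ℝ) - 1) = M / 16 := by
    rw [hΔ]; field_simp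
  -- norm squared decomposition
  have hsq : ∀ v : EuclideanSpace ℝ (Fin d),
      ‖v - xstar‖ ^ 2 = ∑ j, (v j - xstar j) ^ 2 := by
    intro v
    rw [EuclideanSpace.norm_eq, Real.sq_sqrt (by positivity)]
    congr 1; ext j
    simp [Real.norm_eq_abs, sq_abs]
  set a := y i - xstar i with ha
  set b := z i - xstar i with hb
  set P := ∑ j ∈ ({i}ᶜ : Finset (Fin d)), (p j - xstar j) ^ 2 with hP
  have hPnonneg : 0 ≤ P := Finset.sum_nonneg fun j _ => sq_nonneg _
  have hpP : ‖p - xstar‖ ^ 2 = P := by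
    rw [hsq, Fintype.sum_eq_add_sum_compl i, hpi]
    simp
    rfl
  have hyP : ‖y - xstar‖ ^ 2 = a ^ 2 + P := by
    rw [hsq, Fintype.sum_eq_add_sum_compl i]
    congr 1
    apply Finset.sum_congr rfl
    intro j hj
    rw [hyp j (Finset.mem_compl.mp hj |> fun h => by simpa using h)]
  have hzP : ‖z - xstar‖ ^ 2 = b ^ 2 + P := by
    rw [hsq, Fintype.sum_eq_add_sum_compl i]
    congr 1
    apply Finset.sum_congr rfl
    intro j hj
    have hji : j ≠ i := by simpa using hj
    rw [← hyz j hji, hyp j hji]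
  have hPle : P ≤ ((d : ℝ) - 1) * R ^ 2 / 4 := hpP ▸ hproj
  clear_value a b P
  have hδy := abs_le.mp (hδbound y)
  have hδz := abs_le.mp (hδbound z)
  have hb2 : b ^ 2 ≤ (R / 30) ^ 2 := by
    rw [← sq_abs]
    exact pow_le_pow_left₀ (abs_nonneg b) hzclose 2
  have hkey : (M / 2 + δ y) * (a ^ 2 + P) ≤ (M / 2 + δ z) * (b ^ 2 + P) := by
    have h := hf y
    have h' := hf z
    rw [hyP] at h
    rw [hzP] at h'
    linarith
  set u := δ y with hu
  set v := δ z with hv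
  clear_value u v
  clear hf hδbound hsq hyP hzP hpP hP hproj hfyz hyz hyp hpi
  clear hu hv f δ p
  -- main chain
  have hmain : (M / 2 - Δ) * (a ^ 2 + P) ≤ (M / 2 + Δ) * (b ^ 2 + P) := by
    have hL : (M / 2 - Δ) * (a ^ 2 + P) ≤ (M / 2 + u) * (a ^ 2 + P) :=
      mul_le_mul_of_nonneg_right (by linarith [hδy.1]) (by positivity)
    have hRb : (M / 2 + v) * (b ^ 2 + P) ≤ (M / 2 + Δ) * (b ^ 2 + P) :=
      mul_le_mul_of_nonneg_right (by linarith [hδz.2]) (by positivity)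
    linarith
  have h0 : (M / 2 - Δ) * a ^ 2 ≤ (M / 2 + Δ) * b ^ 2 + 2 * Δ * P := by
    linear_combination hmain
  have h1 : Δ * P ≤ M * R ^ 2 / 64 := by
    calc Δ * P ≤ Δ * (((d : ℝ) - 1) * R ^ 2 / 4) :=
          mul_le_mul_of_nonneg_left hPle hΔpos.le
      _ = Δ * ((d : ℝ) - 1) * R ^ 2 / 4 := by ring
      _ = M / 16 * R ^ 2 / 4 := by rw [hΔd]
      _ = M * R ^ 2 / 64 := by ring
  have h2 : (M / 2 + Δ) * b ^ 2 ≤ M * R ^ 2 / 1600 := by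
    calc (M / 2 + Δ) * b ^ 2 ≤ 9 * M / 16 * (R / 30) ^ 2 :=
          mul_le_mul (by linarith) hb2 (sq_nonneg b) (by positivity)
      _ = M * R ^ 2 / 1600 := by ring
  have h3 : 7 * M / 16 * a ^ 2 ≤ (M / 2 - Δ) * a ^ 2 :=
    mul_le_mul_of_nonneg_right (by linarith) (sq_nonneg a)
  have h4 : 7 * M / 16 * a ^ 2 ≤ 7 * M / 16 * (51 / 700 * R ^ 2) := by
    linarith [h0, h1, h2, h3]
  have ha2 : a ^ 2 ≤ 51 / 700 * R ^ 2 :=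
    le_of_mul_le_mul_left h4 (by linarith)
  refine ⟨ha2, ?_, ?_⟩
  · have habs : |a| ≤ Real.sqrt (51 / 700) * R := by
      have h1 : Real.sqrt (a ^ 2) ≤ Real.sqrt (51 / 700 * R ^ 2) :=
        Real.sqrt_le_sqrt ha2
      rwa [Real.sqrt_sq_eq_abs, Real.sqrt_mul (by norm_num),
        Real.sqrt_sq hR.le] at h1
    have hbabs : |b| ≤ R / 30 := hzclose
    have htri : |a - b| ≤ |a| + |b| := abs_sub _ _
    have hab : y i - z i = a - b := by rw [ha, hb]; ring
    rw [hab]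
    calc |a - b| ≤ |a| + |b| := htri
      _ ≤ Real.sqrt (51 / 700) * R + R / 30 := add_le_add habs hbabs
      _ = (1 / 30 + Real.sqrt (51 / 700)) * R := by ring
  · have hs : Real.sqrt (51 / 700) ≤ 3 / 10 := by
      rw [show (3 : ℝ) / 10 = Real.sqrt ((3 / 10) ^ 2) by
        rw [Real.sqrt_sq]; norm_num]
      apply Real.sqrt_le_sqrt; norm_num
    have hmul : (1 / 30 + Real.sqrt (51 / 700)) * R ≤ (1 / 30 + 3 / 10) * R :=
      mul_le_mul_of_nonneg_right (by linarith) hR.le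
    linarith
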